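/- For all real numbers ξ and η, and for any choice of signs ε₁, ε₂ ∈ {+1,-1}, one has |⟨ξ+η⟩ + ε₁⟨ξ⟩ + ε₂⟨η⟩| ≥ (⟨ξ+η⟩ + ⟨ξ⟩ + ⟨η⟩)⁻¹, where ⟨ξ⟩ := √(1+ξ²). In particular this quantity is never zero. -/
import Mathlib


/-- The Japanese bracket `⟨ξ⟩ = √(1+ξ²)`. -/
noncomputable def jb (ξ : ℝ) : ℝ := Real.sqrt (1 + ξ ^ 2)

lemma jb_sq (x : ℝ) : (jb x) ^ 2 = 1 + x ^ 2 := by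
  unfold jb
  rw [Real.sq_sqrt]
  positivity

lemma jb_ge_one (x : ℝ) : 1 ≤ jb x := by
  have h := jb_sq x
  have hn : 0 ≤ jb x := Real.sqrt_nonneg _
  nlinarith [sq_nonneg x]

lemma jb_mul_ge (x y : ℝ) : |x * y| ≤ jb x * jb y := by
  have hx := jb_sq x
  have hy := jb_sq y
  have hxn : 0 ≤ jb x := Real.sqrt_nonneg _
  have hyn : 0 ≤ jb y := Real.sqrt_nonneg _
  rw [abs_le]
  constructor <;> nlinarith [sq_nonneg (x*y - jb x * jb y), sq_nonneg (x*y + jb x * jb y), sq_nonneg (x - y), sq_nonneg (x + y), mul_nonneg hxn hyn]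

/-- Nondegeneracy of the Klein–Gordon resonance phases: for any signs
`ε₁, ε₂ ∈ {1, -1}`, `|⟨ξ+η⟩ + ε₁⟨ξ⟩ + ε₂⟨η⟩| ≥ (⟨ξ+η⟩ + ⟨ξ⟩ + ⟨η⟩)⁻¹`;
in particular the phase never vanishes. -/
theorem stmt_0 (ξ η ε₁ ε₂ : ℝ) (h₁ : ε₁ = 1 ∨ ε₁ = -1) (h₂ : ε₂ = 1 ∨ ε₂ = -1) :
    (jb (ξ + η) + jb ξ + jb η)⁻¹ ≤ |jb (ξ + η) + ε₁ * jb ξ + ε₂ * jb η| ∧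
    jb (ξ + η) + ε₁ * jb ξ + ε₂ * jb η ≠ 0 := by
  set a := jb (ξ + η) with ha
  set b := jb ξ with hb
  set c := jb η with hc
  have ha2 : a ^ 2 = 1 + (ξ + η) ^ 2 := jb_sq _
  have hb2 : b ^ 2 = 1 + ξ ^ 2 := jb_sq _
  have hc2 : c ^ 2 = 1 + η ^ 2 := jb_sq _
  have ha1 : 1 ≤ a := jb_ge_one _
  have hb1 : 1 ≤ b := jb_ge_one _
  have hc1 : 1 ≤ c := jb_ge_one _
  have hab : |(ξ + η) * ξ| ≤ a * b := jb_mul_ge _ _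
  have hac : |(ξ + η) * η| ≤ a * c := jb_mul_ge _ _
  have hbc : |ξ * η| ≤ b * c := jb_mul_ge _ _
  have hab' : -((ξ + η) * ξ) ≤ a * b := (abs_le.mp (by rwa [← abs_neg] at hab)).2
  have hac' : -((ξ + η) * η) ≤ a * c := (abs_le.mp (by rwa [← abs_neg] at hac)).2
  have hbc' : ξ * η ≤ b * c := (abs_le.mp hbc).2
  have hs : (0 : ℝ) < a + b + c := by linarith
  -- key product inequality in each sign case
  have key : 1 ≤ (a + ε₁ * b + ε₂ * c) * (a + b + c) ∨
      (a + ε₁ * b + ε₂ * c ≤ 0 ∧ 1 ≤ -(a + ε₁ * b + ε₂ * c) * (a + b + c)) := by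
    rcases h₁ with h₁ | h₁ <;> rcases h₂ with h₂ | h₂ <;> subst h₁ <;> subst h₂
    · left; nlinarith
    · left; nlinarith
    · left; nlinarith
    · right
      constructor
      · nlinarith
      · nlinarith
  rcases key with h | ⟨hle, h⟩
  · have hXpos : 0 < a + ε₁ * b + ε₂ * c := by
      rcases lt_or_ge 0 (a + ε₁ * b + ε₂ * c) with h' | h'
      · exact h'
      · nlinarith
    constructor
    · rw [abs_of_pos hXpos, inv_eq_one_div, div_le_iff₀ hs]
      linarith
    · exact ne_of_gt hXpos
  · have hXneg : a + ε₁ * b + ε₂ * c < 0 := by nlinarith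
    constructor
    · rw [abs_of_neg hXneg, inv_eq_one_div, div_le_iff₀ hs]
      linarith
    · exact ne_of_lt hXneg
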